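/- There is an absolute constant C > 0 such that if s_1 < s_2 < ... < s_k are distinct integers greater than 1 with φ(s_1) + ... + φ(s_k) ≤ D (for D ≥ 3), then s_1 + ... + s_k ≤ C·D·log log D. -/

import Mathlib

open Finset Real

lemma nat_div_le_fact_factorization {N p : ℕ} (hp : p.Prime) (hpN : p ≤ N) :
    N / p ≤ (Nat.factorial N).factorization p := by
  haveI : Fact p.Prime := ⟨hp⟩
  rw [Nat.factorization_def _ hp,
    padicValNat_factorial (b := Nat.log p N + 1) (Nat.lt_succ_self _)]
  calc N / p = N / p ^ 1 := by rw [pow_one]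
    _ ≤ _ := Finset.single_le_sum (f := fun i => N / p ^ i) (fun i _ => Nat.zero_le _)
        (Finset.mem_Ico.mpr ⟨le_refl 1, by
          have : 0 < Nat.log p N := Nat.log_pos hp.one_lt hpN
          omega⟩)

lemma legendre_sum_le (N : ℕ) (hN : 1 ≤ N) :
    ∑ p ∈ (N+1).primesBelow, ((N / p : ℕ) : ℝ) * Real.log p ≤ Real.log (Nat.factorial N) := by
  have hfact : ((Nat.factorial N) : ℕ) ≠ 0 := Nat.factorial_ne_zero N
  have hlog : Real.log (Nat.factorial N) = ∑ p ∈ (Nat.factorial N).primeFactors,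
      ((Nat.factorial N).factorization p : ℝ) * Real.log p := by
    conv_lhs => rw [← Nat.factorization_prod_pow_eq_self hfact]
    rw [Nat.prod_factorization_eq_prod_primeFactors]
    rw [Nat.cast_prod, Real.log_prod]
    · refine Finset.sum_congr rfl fun p hp => ?_
      rw [Nat.cast_pow, Real.log_pow]
    · intro p hp
      have := (Nat.prime_of_mem_primeFactors hp).pos
      positivity
  rw [hlog]
  calc ∑ p ∈ (N+1).primesBelow, ((N / p : ℕ) : ℝ) * Real.log p
      ≤ ∑ p ∈ (N+1).primesBelow, ((Nat.factorial N).factorization p : ℝ) * Real.log p := ?_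
    _ ≤ _ := Finset.sum_le_sum_of_subset_of_nonneg ?_ ?_
  · refine Finset.sum_le_sum fun p hp => ?_
    have hpp := Nat.prime_of_mem_primesBelow hp
    have hple : p ≤ N := Nat.lt_succ_iff.mp (Nat.lt_of_mem_primesBelow hp)
    have := nat_div_le_fact_factorization hpp hple
    have hlogp : (0:ℝ) ≤ Real.log p := Real.log_nonneg (by exact_mod_cast hpp.one_lt.le)
    exact mul_le_mul_of_nonneg_right (by exact_mod_cast this) hlogp
  · intro p hp
    have hpp := Nat.prime_of_mem_primesBelow hp
    have hple : p ≤ N := Nat.lt_succ_iff.mp (Nat.lt_of_mem_primesBelow hp)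
    exact Nat.mem_primeFactors.mpr ⟨hpp, (Nat.dvd_factorial hpp.pos hple), hfact⟩
  · intro p _ _
    positivity

lemma theta_le (N : ℕ) : ∑ p ∈ (N+1).primesBelow, Real.log p ≤ N * Real.log 4 := by
  have h1 : Real.log (primorial N) ≤ N * Real.log 4 := by
    calc Real.log (primorial N) ≤ Real.log ((4:ℕ)^N : ℕ) := by
          apply Real.log_le_log (by exact_mod_cast primorial_pos N)
            (by exact_mod_cast primorial_le_4_pow N)
      _ = N * Real.log 4 := by push_cast; rw [Real.log_pow]
  refine le_trans (le_of_eq ?_) h1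
  rw [primorial, Nat.cast_prod, Real.log_prod]
  · rfl
  · intro p hp
    have := (Finset.mem_filter.mp hp).2.pos
    positivity

/-- Mertens' first-type bound. -/
lemma mertens1 (N : ℕ) (hN : 1 ≤ N) :
    ∑ p ∈ (N+1).primesBelow, Real.log p / p ≤ Real.log N + Real.log 4 := by
  have hN0 : (0:ℝ) < N := by exact_mod_cast hN
  rw [← mul_le_mul_iff_right₀ hN0]
  have key : ∀ p ∈ (N+1).primesBelow, (N:ℝ) * (Real.log p / p) ≤
      ((N / p : ℕ) : ℝ) * Real.log p + Real.log p := by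
    intro p hp
    have hpp := Nat.prime_of_mem_primesBelow hp
    have hp0 : (0:ℝ) < p := by exact_mod_cast hpp.pos
    have hlogp : (0:ℝ) ≤ Real.log p := Real.log_nonneg (by exact_mod_cast hpp.one_lt.le)
    have hdiv : (N:ℝ) / p ≤ ((N / p : ℕ) : ℝ) + 1 := by
      rw [div_le_iff₀ hp0]
      have h1 : N < p * (N / p + 1) := Nat.lt_mul_div_succ N hpp.pos
      have : (N:ℝ) < p * (((N / p : ℕ) : ℝ) + 1) := by exact_mod_cast h1
      nlinarith
    calc (N:ℝ) * (Real.log p / p) = ((N:ℝ)/p) * Real.log p := by ring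
      _ ≤ (((N / p : ℕ) : ℝ) + 1) * Real.log p := mul_le_mul_of_nonneg_right hdiv hlogp
      _ = ((N / p : ℕ) : ℝ) * Real.log p + Real.log p := by ring
  calc (N:ℝ) * ∑ p ∈ (N+1).primesBelow, Real.log p / p
      = ∑ p ∈ (N+1).primesBelow, (N:ℝ) * (Real.log p / p) := Finset.mul_sum _ _ _
    _ ≤ ∑ p ∈ (N+1).primesBelow, (((N / p : ℕ) : ℝ) * Real.log p + Real.log p) :=
        Finset.sum_le_sum key
    _ = (∑ p ∈ (N+1).primesBelow, ((N / p : ℕ) : ℝ) * Real.log p)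
        + ∑ p ∈ (N+1).primesBelow, Real.log p := Finset.sum_add_distrib
    _ ≤ Real.log (Nat.factorial N) + N * Real.log 4 :=
        add_le_add (legendre_sum_le N hN) (theta_le N)
    _ ≤ N * Real.log N + N * Real.log 4 := by
        have : Real.log (Nat.factorial N) ≤ N * Real.log N := by
          calc Real.log (Nat.factorial N) ≤ Real.log ((N:ℕ)^N : ℕ) :=
                Real.log_le_log (by exact_mod_cast Nat.factorial_pos N)
                  (by exact_mod_cast Nat.factorial_le_pow N)
            _ = N * Real.log N := by push_cast; rw [Real.log_pow]
        linarith
    _ = N * (Real.log N + Real.log 4) := by ring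

/-- invariant for the Abel-summation induction -/
lemma mertens2_aux (N : ℕ) (hN : 2 ≤ N) :
    ∑ p ∈ (N+1).primesBelow, (1:ℝ)/p ≤
      (∑ p ∈ (N+1).primesBelow, Real.log p / p) / Real.log N
      + (Real.log (Real.log N) - Real.log (Real.log 2))
      + (Real.log 4 + 1) * (1/Real.log 2 - 1/Real.log N) := by
  induction N, hN using Nat.le_induction with
  | base =>
      have h3 : (3:ℕ).primesBelow = {2} := by decide
      rw [show ((2:ℕ)+1) = 3 from rfl, h3]
      simp only [Finset.sum_singleton]
      have hlog2 : Real.log 2 ≠ 0 := by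
        have := Real.log_pos (by norm_num : (1:ℝ) < 2); linarith
      rw [Nat.cast_ofNat]
      have h : Real.log 2/2/Real.log 2 = 1/2 := by rw [div_right_comm, div_self hlog2]
      rw [h, sub_self, sub_self, mul_zero, add_zero, add_zero]
  | succ N hN ih =>
      have hN0 : (0:ℝ) < N := by positivity
      have hNR : (2:ℝ) ≤ N := by exact_mod_cast hN
      have hlogN : (0:ℝ) < Real.log N := Real.log_pos (by linarith)
      have hlogN1 : (0:ℝ) < Real.log (N+1) := Real.log_pos (by linarith)
      have hlogmono : Real.log N ≤ Real.log (N+1) :=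
        Real.log_le_log hN0 (by linarith)
      -- the new prime (or not)
      have hsplit : (N+1+1).primesBelow =
          if (N+1).Prime then insert (N+1) ((N+1).primesBelow) else (N+1).primesBelow :=
        Nat.primesBelow_succ (N+1)
      have hnotmem : (N+1) ∉ (N+1).primesBelow := Nat.notMem_primesBelow (N+1)
      have hA : ∑ p ∈ (N+1).primesBelow, Real.log p / p ≤ Real.log N + Real.log 4 :=
        mertens1 N (by omega)
      have hAnn : 0 ≤ ∑ p ∈ (N+1).primesBelow, Real.log p / p := by
        apply Finset.sum_nonneg
        intro p hp
        have hpp := Nat.prime_of_mem_primesBelow hp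
        have : (0:ℝ) ≤ Real.log p := Real.log_nonneg (by exact_mod_cast hpp.one_lt.le)
        positivity
      set A := ∑ p ∈ (N+1).primesBelow, Real.log p / p with hAdef
      -- key analytic inequality : A * (1/log N - 1/log (N+1)) ≤ G(N+1) - G(N)
      have hd0 : 0 ≤ 1/Real.log N - 1/Real.log (N+1) := by
        rw [sub_nonneg]
        apply one_div_le_one_div_of_le hlogN hlogmono
      have hkey : A * (1/Real.log N - 1/Real.log (N+1)) ≤
          (Real.log (Real.log (N+1)) - Real.log (Real.log N))
          + (Real.log 4 + 1) * (1/Real.log N - 1/Real.log (N+1)) := by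
        have h1 : A * (1/Real.log N - 1/Real.log (N+1)) ≤
            (Real.log N + Real.log 4) * (1/Real.log N - 1/Real.log (N+1)) :=
          mul_le_mul_of_nonneg_right hA hd0
        have h2 : Real.log N * (1/Real.log N - 1/Real.log (N+1)) ≤
            Real.log (Real.log (N+1)) - Real.log (Real.log N) := by
          have hexp : Real.log N * (1/Real.log N - 1/Real.log (N+1)) =
              (Real.log (N+1) - Real.log N) / Real.log (N+1) := by
            field_simp
          rw [hexp]
          -- (x - y)/x ≤ log x - log y for 0 < y ≤ x
          have hlt : Real.log (Real.log N) ≤ Real.log (Real.log (N+1)) -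
              (Real.log (N+1) - Real.log N) / Real.log (N+1) := by
            have hlog_le : Real.log (Real.log N / Real.log (N+1)) ≤
                Real.log N / Real.log (N+1) - 1 :=
              Real.log_le_sub_one_of_pos (by positivity)
            have heq : Real.log (Real.log N / Real.log (N+1)) =
                Real.log (Real.log N) - Real.log (Real.log (N+1)) :=
              Real.log_div (ne_of_gt hlogN) (ne_of_gt hlogN1)
            rw [heq] at hlog_le
            have : Real.log N / Real.log (N+1) - 1 =
                -((Real.log (N+1) - Real.log N) / Real.log (N+1)) := by
              field_simp
              ring
            rw [this] at hlog_le
            linarith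
          linarith
        have h3 : Real.log 4 * (1/Real.log N - 1/Real.log (N+1)) ≤
            (Real.log 4 + 1) * (1/Real.log N - 1/Real.log (N+1)) := by
          apply mul_le_mul_of_nonneg_right _ hd0
          linarith
        nlinarith [h1, h2, h3]
      -- now combine
      by_cases hp : (N+1).Prime
      · rw [hsplit, if_pos hp]
        rw [Finset.sum_insert hnotmem, Finset.sum_insert hnotmem]
        have hcast : ((N:ℝ)+1) = ((N+1:ℕ):ℝ) := by push_cast; ring
        have hterm : (1:ℝ)/((N+1:ℕ):ℝ) =
            (Real.log ((N+1:ℕ):ℝ) / ((N+1:ℕ):ℝ)) / Real.log (N+1) := by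
          rw [← hcast]
          field_simp
        push_cast
        push_cast at ih
        have hApos : 0 ≤ Real.log ((N:ℝ)+1) / ((N:ℝ)+1) := by
          have : (0:ℝ) ≤ Real.log ((N:ℝ)+1) := Real.log_nonneg (by linarith)
          positivity
        -- goal: 1/(N+1) + T N ≤ (log(N+1)/(N+1) + A)/log(N+1) + G(N+1)
        have hdiv : (Real.log ((N:ℝ)+1) / ((N:ℝ)+1) + A) / Real.log ((N:ℝ)+1)
            = (Real.log ((N:ℝ)+1) / ((N:ℝ)+1)) / Real.log ((N:ℝ)+1)
              + A / Real.log ((N:ℝ)+1) := add_div _ _ _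
        have h1 : (Real.log ((N:ℝ)+1) / ((N:ℝ)+1)) / Real.log ((N:ℝ)+1) = 1/((N:ℝ)+1) := by
          rw [div_right_comm, div_self (ne_of_gt hlogN1)]
        have h2 : A / Real.log ((N:ℝ)+1) - A / Real.log N
            = -(A * (1/Real.log N - 1/Real.log ((N:ℝ)+1))) := by
          field_simp
          ring
        have hexp : (Real.log 4+1)*(1/Real.log 2 - 1/Real.log ((N:ℝ)+1))
            = (Real.log 4+1)*(1/Real.log 2 - 1/Real.log N)
              + (Real.log 4+1)*(1/Real.log N - 1/Real.log ((N:ℝ)+1)) := by ring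
        rw [hdiv, h1]
        linarith [ih, hkey, h2, hexp]
      · rw [hsplit, if_neg hp]
        push_cast at ih ⊢
        have hstep : A / Real.log (N+1) + (Real.log (Real.log (N+1)) - Real.log (Real.log 2))
            + (Real.log 4 + 1) * (1/Real.log 2 - 1/Real.log (N+1))
            - (A / Real.log N + (Real.log (Real.log N) - Real.log (Real.log 2))
            + (Real.log 4 + 1) * (1/Real.log 2 - 1/Real.log N)) ≥ 0 := by
          have : A / Real.log (N+1) - A / Real.log N =
              -(A * (1/Real.log N - 1/Real.log (N+1))) := by
            field_simp; ring
          nlinarith [hkey]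
        linarith

lemma mertens2 (N : ℕ) (hN : 2 ≤ N) :
    ∑ p ∈ (N+1).primesBelow, (1:ℝ)/p ≤ Real.log (Real.log N) + 10 := by
  have h := mertens2_aux N hN
  have hNR : (2:ℝ) ≤ N := by exact_mod_cast hN
  have hlog2 : (0:ℝ) < Real.log 2 := Real.log_pos (by norm_num)
  have hlogN : Real.log 2 ≤ Real.log N := Real.log_le_log (by norm_num) hNR
  have hlogNpos : (0:ℝ) < Real.log N := lt_of_lt_of_le hlog2 hlogN
  have hA : ∑ p ∈ (N+1).primesBelow, Real.log p / p ≤ Real.log N + Real.log 4 :=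
    mertens1 N (by omega)
  have hlog4 : Real.log 4 = 2 * Real.log 2 := by
    rw [show (4:ℝ) = 2^2 by norm_num, Real.log_pow]; push_cast; ring
  have e1 : (∑ p ∈ (N+1).primesBelow, Real.log p / p) / Real.log N
      ≤ 1 + Real.log 4 / Real.log 2 := by
    rw [div_le_iff₀ hlogNpos]
    have hr : Real.log 4 / Real.log 2 * Real.log 2 = Real.log 4 :=
      div_mul_cancel₀ _ (ne_of_gt hlog2)
    have hlog4nn : (0:ℝ) ≤ Real.log 4 := by rw [hlog4]; positivity
    nlinarith [hA, hlogN, hlog2, hr, div_nonneg hlog4nn hlog2.le]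
  have e2 : -(Real.log (Real.log 2)) ≤ 1/Real.log 2 - 1 := by
    have h1 : Real.log (1/Real.log 2) ≤ 1/Real.log 2 - 1 :=
      Real.log_le_sub_one_of_pos (by positivity)
    rw [one_div, Real.log_inv] at h1
    rw [one_div]
    linarith
  have e3 : (Real.log 4 + 1) * (1/Real.log 2 - 1/Real.log N)
      ≤ (Real.log 4 + 1) * (1/Real.log 2) := by
    apply mul_le_mul_of_nonneg_left
    · have : (0:ℝ) ≤ 1/Real.log N := by positivity
      linarith
    · rw [hlog4]; positivity
  have hnum : 1 + Real.log 4 / Real.log 2 + (1/Real.log 2 - 1)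
      + (Real.log 4 + 1) * (1/Real.log 2) ≤ 10 := by
    rw [hlog4]
    have h2 : Real.log 2 < 0.6931471808 := Real.log_two_lt_d9
    have h2' : (0.6931471803:ℝ) < Real.log 2 := Real.log_two_gt_d9
    have hinv : 1/Real.log 2 ≤ 1/0.6931471803 := by
      apply one_div_le_one_div_of_le (by norm_num) h2'.le
    have hd : 2*Real.log 2 / Real.log 2 = 2 := by field_simp
    rw [hd]
    nlinarith [hinv, h2, h2']
  linarith

lemma telescope_aux (n : ℕ) (hn : 1 ≤ n) :
    ∑ m ∈ Finset.Icc 2 n, ((1:ℝ)/((m:ℝ)-1) - 1/m) = 1 - 1/n := by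
  induction n, hn using Nat.le_induction with
  | base => simp
  | succ n hn ih =>
      rw [Finset.sum_Icc_succ_top (by omega : 2 ≤ n+1), ih]
      have hn0 : (0:ℝ) < n := by positivity
      have : ((n:ℝ)+1) - 1 = n := by ring
      push_cast
      rw [this]
      field_simp
      ring

lemma sum_primeFactors_pp_inv (n : ℕ) (hn : 1 ≤ n) :
    ∑ p ∈ n.primeFactors, ((1:ℝ)/((p:ℝ)-1) - 1/p) ≤ 1 := by
  have hsub : n.primeFactors ⊆ Finset.Icc 2 n := by
    intro p hp
    have hpp := Nat.prime_of_mem_primeFactors hp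
    have hdvd := Nat.dvd_of_mem_primeFactors hp
    exact Finset.mem_Icc.mpr ⟨hpp.two_le, Nat.le_of_dvd hn hdvd⟩
  calc ∑ p ∈ n.primeFactors, ((1:ℝ)/((p:ℝ)-1) - 1/p)
      ≤ ∑ m ∈ Finset.Icc 2 n, ((1:ℝ)/((m:ℝ)-1) - 1/m) := by
        apply Finset.sum_le_sum_of_subset_of_nonneg hsub
        intro m hm _
        have h2 : 2 ≤ m := (Finset.mem_Icc.mp hm).1
        have h2R : (2:ℝ) ≤ m := by exact_mod_cast h2
        have hm1 : (0:ℝ) < (m:ℝ) - 1 := by linarith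
        have hm0 : (0:ℝ) < m := by linarith
        rw [sub_nonneg]
        apply one_div_le_one_div_of_le hm1 (by linarith)
    _ = 1 - 1/n := telescope_aux n hn
    _ ≤ 1 := by
        have : (0:ℝ) ≤ 1/n := by positivity
        linarith

lemma sum_primeFactors_inv (n : ℕ) (hn : 1 ≤ n) :
    ∑ p ∈ n.primeFactors, (1:ℝ)/p
      ≤ Real.log (Real.log (max n.primeFactors.card 3)) + 11 := by
  set ω := n.primeFactors.card with hω
  set Nb := max ω 3 with hNb
  have hNb3 : 3 ≤ Nb := le_max_right _ _
  have hωNb : ω ≤ Nb := le_max_left _ _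
  rw [← Finset.sum_filter_add_sum_filter_not n.primeFactors (fun p => p < Nb + 1)]
  have hsmall : ∑ p ∈ n.primeFactors.filter (fun p => p < Nb + 1), (1:ℝ)/p
      ≤ Real.log (Real.log Nb) + 10 := by
    refine le_trans ?_ (mertens2 Nb (by omega))
    apply Finset.sum_le_sum_of_subset_of_nonneg
    · intro p hp
      rw [Finset.mem_filter] at hp
      exact Finset.mem_filter.mpr ⟨Finset.mem_range.mpr hp.2,
        Nat.prime_of_mem_primeFactors hp.1⟩
    · intro p _ _
      positivity
  have hbig : ∑ p ∈ n.primeFactors.filter (fun p => ¬ p < Nb + 1), (1:ℝ)/p ≤ 1 := by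
    have hcard : (n.primeFactors.filter (fun p => ¬ p < Nb + 1)).card ≤ ω :=
      le_trans (Finset.card_filter_le _ _) (le_of_eq hω.symm)
    have hterm : ∀ p ∈ n.primeFactors.filter (fun p => ¬ p < Nb + 1),
        (1:ℝ)/p ≤ 1/(Nb+1) := by
      intro p hp
      rw [Finset.mem_filter] at hp
      have : Nb + 1 ≤ p := by omega
      have hR : ((Nb:ℝ)+1) ≤ p := by exact_mod_cast this
      apply one_div_le_one_div_of_le (by positivity) hR
    calc ∑ p ∈ n.primeFactors.filter (fun p => ¬ p < Nb + 1), (1:ℝ)/p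
        ≤ ∑ _p ∈ n.primeFactors.filter (fun p => ¬ p < Nb + 1), (1:ℝ)/(Nb+1) :=
          Finset.sum_le_sum hterm
      _ = (n.primeFactors.filter (fun p => ¬ p < Nb + 1)).card * (1/((Nb:ℝ)+1)) := by
          rw [Finset.sum_const, nsmul_eq_mul]
      _ ≤ 1 := by
          have hc : ((n.primeFactors.filter (fun p => ¬ p < Nb + 1)).card : ℝ) ≤ (Nb:ℝ) := by
            exact_mod_cast le_trans hcard hωNb
          rw [mul_one_div, div_le_one (by positivity)]
          linarith
  have hcast : ((Nb:ℕ):ℝ) = (max (ω:ℝ) 3 : ℝ) := by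
    rw [hNb]; push_cast; rfl
  rw [hcast] at hsmall
  linarith

lemma totient_formula_real (n : ℕ) :
    (Nat.totient n : ℝ) = n * ∏ p ∈ n.primeFactors, (1 - (p:ℝ)⁻¹) := by
  have h := Nat.totient_eq_mul_prod_factors n
  have h2 : ((Nat.totient n : ℚ) : ℝ) = (((n : ℚ) * ∏ p ∈ n.primeFactors, (1 - (p:ℚ)⁻¹)) : ℚ) :=
    by exact_mod_cast congrArg (fun q : ℚ => (q : ℝ)) h
  push_cast at h2
  exact_mod_cast h2

lemma totient_bound (n : ℕ) (hn : 2 ≤ n) :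
    (n:ℝ) ≤ Real.exp 12 * Real.log (max n.primeFactors.card 3) * (Nat.totient n) := by
  set ω := n.primeFactors.card with hω
  have hfac : ∀ p ∈ n.primeFactors, (0:ℝ) < 1 - (p:ℝ)⁻¹ := by
    intro p hp
    have h2 : (2:ℝ) ≤ p := by exact_mod_cast (Nat.prime_of_mem_primeFactors hp).two_le
    have : (p:ℝ)⁻¹ ≤ 2⁻¹ := by
      apply inv_anti₀ (by norm_num) h2
    linarith
  have hP : (0:ℝ) < ∏ p ∈ n.primeFactors, (1 - (p:ℝ)⁻¹) :=
    Finset.prod_pos hfac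
  set P := ∏ p ∈ n.primeFactors, (1 - (p:ℝ)⁻¹) with hPdef
  have hphi : (Nat.totient n : ℝ) = n * P := totient_formula_real n
  have hMpos : (0:ℝ) < Real.log (max ω 3) := by
    apply Real.log_pos
    have h3 : (3:ℝ) ≤ max (ω:ℝ) 3 := le_max_right _ _
    linarith
  -- key: P⁻¹ ≤ exp 12 * log (max ω 3)
  have hinv : P⁻¹ ≤ Real.exp 12 * Real.log (max ω 3) := by
    have hPinv : P⁻¹ = ∏ p ∈ n.primeFactors, (1 - (p:ℝ)⁻¹)⁻¹ := by
      rw [hPdef, ← Finset.prod_inv_distrib]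
    have hexp : ∏ p ∈ n.primeFactors, (1 - (p:ℝ)⁻¹)⁻¹ =
        Real.exp (∑ p ∈ n.primeFactors, Real.log ((1 - (p:ℝ)⁻¹)⁻¹)) := by
      rw [Real.exp_sum]
      exact Finset.prod_congr rfl fun p hp =>
        (Real.exp_log (inv_pos.mpr (hfac p hp))).symm
    have hsum : ∑ p ∈ n.primeFactors, Real.log ((1 - (p:ℝ)⁻¹)⁻¹)
        ≤ Real.log (Real.log (max ω 3)) + 12 := by
      have hterm : ∀ p ∈ n.primeFactors, Real.log ((1 - (p:ℝ)⁻¹)⁻¹)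
          ≤ 1/p + (1/((p:ℝ)-1) - 1/p) := by
        intro p hp
        have h2 : (2:ℝ) ≤ p := by exact_mod_cast (Nat.prime_of_mem_primeFactors hp).two_le
        have hp0 : (0:ℝ) < p := by linarith
        have hp1 : (0:ℝ) < (p:ℝ) - 1 := by linarith
        have hval : (1 - (p:ℝ)⁻¹)⁻¹ = p / ((p:ℝ)-1) := by
          rw [inv_eq_one_div]
          rw [show 1 - (p:ℝ)⁻¹ = ((p:ℝ)-1)/p by field_simp]
          rw [one_div_div]
        rw [hval]
        have := Real.log_le_sub_one_of_pos (show (0:ℝ) < (p:ℝ)/((p:ℝ)-1) by positivity)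
        have heq : (p:ℝ)/((p:ℝ)-1) - 1 = 1/((p:ℝ)-1) := by field_simp; ring
        linarith
      calc ∑ p ∈ n.primeFactors, Real.log ((1 - (p:ℝ)⁻¹)⁻¹)
          ≤ ∑ p ∈ n.primeFactors, (1/(p:ℝ) + (1/((p:ℝ)-1) - 1/p)) :=
            Finset.sum_le_sum hterm
        _ = (∑ p ∈ n.primeFactors, 1/(p:ℝ))
            + ∑ p ∈ n.primeFactors, (1/((p:ℝ)-1) - 1/p) := Finset.sum_add_distrib
        _ ≤ (Real.log (Real.log (max ω 3)) + 11) + 1 :=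
            add_le_add (sum_primeFactors_inv n (by omega)) (sum_primeFactors_pp_inv n (by omega))
        _ = Real.log (Real.log (max ω 3)) + 12 := by ring
    calc P⁻¹ = Real.exp (∑ p ∈ n.primeFactors, Real.log ((1 - (p:ℝ)⁻¹)⁻¹)) := by
          rw [hPinv, hexp]
      _ ≤ Real.exp (Real.log (Real.log (max ω 3)) + 12) := Real.exp_le_exp.mpr hsum
      _ = Real.exp 12 * Real.log (max ω 3) := by
          rw [Real.exp_add, Real.exp_log hMpos]; ring
  -- conclude
  have hphi_pos : (0:ℝ) < (Nat.totient n : ℝ) := by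
    exact_mod_cast Nat.totient_pos.mpr (by omega : 0 < n)
  have hn_eq : (n:ℝ) = (Nat.totient n : ℝ) * P⁻¹ := by
    rw [hphi]
    field_simp
  rw [hn_eq]
  calc (Nat.totient n : ℝ) * P⁻¹ ≤ (Nat.totient n : ℝ) * (Real.exp 12 * Real.log (max ω 3)) :=
        mul_le_mul_of_nonneg_left hinv hphi_pos.le
    _ = Real.exp 12 * Real.log (max ω 3) * (Nat.totient n) := by ring

lemma card_primeFactors_le_real (n : ℕ) (hn : 2 ≤ n) :
    (n.primeFactors.card : ℝ) ≤ 2 * Real.log n := by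
  have h2 : 2 ^ n.primeFactors.card ≤ n := by
    calc 2 ^ n.primeFactors.card = ∏ _p ∈ n.primeFactors, 2 := by
          rw [Finset.prod_const]
      _ ≤ ∏ p ∈ n.primeFactors, p :=
          Finset.prod_le_prod' fun p hp => (Nat.prime_of_mem_primeFactors hp).two_le
      _ ≤ n := Nat.le_of_dvd (by omega) (Nat.prod_primeFactors_dvd n)
  have hR : (2:ℝ) ^ n.primeFactors.card ≤ n := by exact_mod_cast h2
  have hlog : (n.primeFactors.card : ℝ) * Real.log 2 ≤ Real.log n := by
    rw [← Real.log_pow]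
    exact Real.log_le_log (by positivity) hR
  have hlog2 : (0.6931471803:ℝ) < Real.log 2 := Real.log_two_gt_d9
  nlinarith [hlog, hlog2, (Nat.cast_nonneg (α := ℝ) n.primeFactors.card)]

lemma totient_bound2 (n : ℕ) (hn : 2 ≤ n) :
    (n:ℝ) ≤ Real.exp 12 * Real.log (3 + 2 * Real.log n) * (Nat.totient n) := by
  have h1 := totient_bound n hn
  have hlogn : (0:ℝ) ≤ Real.log n := Real.log_nonneg (by exact_mod_cast hn.trans' (by norm_num))
  have hω := card_primeFactors_le_real n hn
  have hmax : max ((n.primeFactors.card : ℕ):ℝ) 3 ≤ 3 + 2 * Real.log n := by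
    apply max_le <;> linarith
  have hmono : Real.log (max ((n.primeFactors.card : ℕ):ℝ) 3)
      ≤ Real.log (3 + 2 * Real.log n) := by
    apply Real.log_le_log (by positivity) hmax
  have hphi : (0:ℝ) ≤ (Nat.totient n : ℝ) := by positivity
  have hexp : (0:ℝ) < Real.exp 12 := Real.exp_pos 12
  calc (n:ℝ) ≤ Real.exp 12 * Real.log (max ((n.primeFactors.card : ℕ):ℝ) 3) * (Nat.totient n) := h1
    _ ≤ Real.exp 12 * Real.log (3 + 2 * Real.log n) * (Nat.totient n) := by
        apply mul_le_mul_of_nonneg_right _ hphi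
        exact mul_le_mul_of_nonneg_left hmono hexp.le

lemma crude_bound (n : ℕ) (D : ℝ) (hn : 2 ≤ n) (hD : 1 ≤ D)
    (hφ : (Nat.totient n : ℝ) ≤ D) : (n:ℝ) ≤ 49 * Real.exp 24 * D^2 := by
  have h1 := totient_bound2 n hn
  set x := Real.sqrt n with hx
  have hn0 : (0:ℝ) ≤ n := by positivity
  have hx2 : x^2 = n := Real.sq_sqrt hn0
  have hx1 : 1 ≤ x := by
    rw [hx, show (1:ℝ) = Real.sqrt 1 by rw [Real.sqrt_one]]
    exact Real.sqrt_le_sqrt (by exact_mod_cast hn.trans' (by norm_num))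
  have hlogn : Real.log n ≤ 2 * x := by
    rw [← hx2, Real.log_pow]
    have := Real.log_le_self (by positivity : (0:ℝ) ≤ x)
    push_cast
    linarith
  have harg : Real.log (3 + 2 * Real.log n) ≤ 7 * x := by
    have h0 : (0:ℝ) ≤ Real.log n := Real.log_nonneg (by exact_mod_cast hn.trans' (by norm_num))
    have := Real.log_le_self (show (0:ℝ) ≤ 3 + 2*Real.log n by linarith)
    linarith
  have hexp12 : (0:ℝ) < Real.exp 12 := Real.exp_pos _
  have hφ0 : (0:ℝ) ≤ (Nat.totient n : ℝ) := by positivity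
  have hchain : (n:ℝ) ≤ Real.exp 12 * (7*x) * D := by
    calc (n:ℝ) ≤ Real.exp 12 * Real.log (3 + 2*Real.log n) * (Nat.totient n) := h1
      _ ≤ Real.exp 12 * (7*x) * (Nat.totient n) := by
          apply mul_le_mul_of_nonneg_right _ hφ0
          exact mul_le_mul_of_nonneg_left harg hexp12.le
      _ ≤ Real.exp 12 * (7*x) * D := by
          apply mul_le_mul_of_nonneg_left hφ
          positivity
  have hxle : x ≤ 7 * Real.exp 12 * D := by
    have hx0 : 0 < x := by linarith
    have h : x * x ≤ (7 * Real.exp 12 * D) * x := by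
      nlinarith [hchain, hx2]
    exact le_of_mul_le_mul_right (by linarith [h]) hx0
  have he : Real.exp 12 * Real.exp 12 = Real.exp 24 := by
    rw [← Real.exp_add]; norm_num
  calc (n:ℝ) = x * x := by rw [← hx2]; ring
    _ ≤ (7 * Real.exp 12 * D) * (7 * Real.exp 12 * D) := by
        apply mul_le_mul hxle hxle (by linarith) (by positivity)
    _ = 49 * Real.exp 24 * D^2 := by rw [← he]; ring

lemma log_three_ge : (1.026:ℝ) ≤ Real.log 3 := by
  have h2 : (0.6931471803:ℝ) < Real.log 2 := Real.log_two_gt_d9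
  have h32 : Real.log 3 = Real.log 2 + Real.log (3/2) := by
    rw [← Real.log_mul (by norm_num) (by norm_num)]; norm_num
  have h15 : (1:ℝ) - 1/(3/2) ≤ Real.log (3/2) := by
    have := Real.log_le_sub_one_of_pos (show (0:ℝ) < 2/3 by norm_num)
    have heq : Real.log ((2:ℝ)/3) = - Real.log (3/2) := by
      rw [← Real.log_inv]; norm_num
    rw [heq] at this
    norm_num at this ⊢
    linarith
  rw [h32]
  norm_num at h15
  linarith

lemma loglog_lower (D : ℕ) (hD : 3 ≤ D) : (1/40 : ℝ) ≤ Real.log (Real.log D) := by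
  have h3 : (3:ℝ) ≤ D := by exact_mod_cast hD
  have hlog3 : (1.026:ℝ) ≤ Real.log 3 := log_three_ge
  have hmono : Real.log 3 ≤ Real.log D := Real.log_le_log (by norm_num) h3
  have hlogD : (1.026:ℝ) ≤ Real.log D := le_trans hlog3 hmono
  have hmono2 : Real.log (Real.log 3) ≤ Real.log (Real.log D) :=
    Real.log_le_log (by linarith) hmono
  have : (1:ℝ) - 1/Real.log 3 ≤ Real.log (Real.log 3) := by
    have h := Real.log_le_sub_one_of_pos (show (0:ℝ) < 1/Real.log 3 by positivity)
    rw [one_div, Real.log_inv] at h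
    rw [one_div]
    linarith
  have hinv : 1/Real.log 3 ≤ 1/1.026 := one_div_le_one_div_of_le (by norm_num) hlog3
  have : (1:ℝ) - 1/1.026 ≤ Real.log (Real.log 3) := by linarith
  have hnum : (1/40:ℝ) ≤ 1 - 1/1.026 := by norm_num
  linarith

lemma loglog_upper (n D : ℕ) (hn : 2 ≤ n) (hD : 3 ≤ D)
    (hcrude : (n:ℝ) ≤ 49 * Real.exp 24 * (D:ℝ)^2) :
    Real.log (3 + 2 * Real.log n) ≤ 7000 * Real.log (Real.log D) := by
  have h3 : (3:ℝ) ≤ D := by exact_mod_cast hD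
  have hlogD : (1:ℝ) ≤ Real.log D := by
    have := log_three_ge
    have hmono : Real.log 3 ≤ Real.log D := Real.log_le_log (by norm_num) h3
    linarith
  have hn0 : (0:ℝ) < n := by positivity
  have hlogn : Real.log n ≤ Real.log (49 * Real.exp 24 * (D:ℝ)^2) :=
    Real.log_le_log hn0 hcrude
  have hsplit : Real.log (49 * Real.exp 24 * (D:ℝ)^2)
      = Real.log 49 + 24 + 2 * Real.log D := by
    rw [Real.log_mul (by positivity) (by positivity),
      Real.log_mul (by norm_num) (by positivity), Real.log_exp, Real.log_pow]
    push_cast; ring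
  have hlog49 : Real.log 49 ≤ 49 := Real.log_le_self (by norm_num)
  have hlognD : Real.log n ≤ 75 * Real.log D := by
    rw [hsplit] at hlogn
    nlinarith [hlogD]
  have harg : 3 + 2 * Real.log n ≤ 153 * Real.log D := by nlinarith [hlogD]
  have hargpos : (0:ℝ) < 3 + 2 * Real.log n := by
    have : (0:ℝ) ≤ Real.log n := Real.log_nonneg (by exact_mod_cast hn.trans' (by norm_num))
    linarith
  have h1 : Real.log (3 + 2 * Real.log n) ≤ Real.log (153 * Real.log D) :=
    Real.log_le_log hargpos harg
  have h2 : Real.log (153 * Real.log D) = Real.log 153 + Real.log (Real.log D) := by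
    rw [Real.log_mul (by norm_num) (by linarith)]
  have h153 : Real.log 153 ≤ 153 := Real.log_le_self (by norm_num)
  have hll := loglog_lower D hD
  nlinarith [h1, h2, h153, hll]

/-- if distinct integers `s₁ < ⋯ < s_k`, all `> 1`, satisfy
`φ(s₁) + ⋯ + φ(s_k) ≤ D`, then `s₁ + ⋯ + s_k ≤ C·D·log log D`. -/
theorem stmt_10 : ∃ C : ℝ, 0 < C ∧ ∀ D : ℕ, 3 ≤ D →
    ∀ k : ℕ, ∀ s : Fin k → ℕ, StrictMono s → (∀ i, 1 < s i) →
      (∑ i, Nat.totient (s i) ≤ D) →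
      ((∑ i, s i : ℕ) : ℝ) ≤ C * D * Real.log (Real.log D) := by
  refine ⟨Real.exp 12 * 7000, by positivity, ?_⟩
  intro D hD k s _hmono hgt hsum
  have hDR : (3:ℝ) ≤ D := by exact_mod_cast hD
  have hsumR : (∑ i, (Nat.totient (s i) : ℝ)) ≤ D := by
    have : ((∑ i, Nat.totient (s i) : ℕ) : ℝ) ≤ D := by exact_mod_cast hsum
    rwa [Nat.cast_sum] at this
  have hll : (0:ℝ) ≤ Real.log (Real.log D) := by
    have := loglog_lower D hD
    linarith
  -- per-element bound
  have hkey : ∀ i, (s i : ℝ) ≤ Real.exp 12 * 7000 * Real.log (Real.log D)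
      * (Nat.totient (s i)) := by
    intro i
    have hsi : 2 ≤ s i := hgt i
    have hφD : (Nat.totient (s i) : ℝ) ≤ D := by
      have h1 : Nat.totient (s i) ≤ ∑ j, Nat.totient (s j) :=
        Finset.single_le_sum (f := fun j => Nat.totient (s j))
          (fun j _ => Nat.zero_le _) (Finset.mem_univ i)
      exact_mod_cast le_trans h1 hsum
    have hcrude := crude_bound (s i) D hsi (by linarith) hφD
    have hlogbound := loglog_upper (s i) D hsi hD hcrude
    have h1 := totient_bound2 (s i) hsi
    have hφ0 : (0:ℝ) ≤ (Nat.totient (s i) : ℝ) := by positivity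
    calc (s i : ℝ) ≤ Real.exp 12 * Real.log (3 + 2 * Real.log (s i)) * (Nat.totient (s i)) := h1
      _ ≤ Real.exp 12 * (7000 * Real.log (Real.log D)) * (Nat.totient (s i)) := by
          apply mul_le_mul_of_nonneg_right _ hφ0
          exact mul_le_mul_of_nonneg_left hlogbound (Real.exp_pos 12).le
      _ = Real.exp 12 * 7000 * Real.log (Real.log D) * (Nat.totient (s i)) := by ring
  calc ((∑ i, s i : ℕ) : ℝ) = ∑ i, (s i : ℝ) := by rw [Nat.cast_sum]
    _ ≤ ∑ i, Real.exp 12 * 7000 * Real.log (Real.log D) * (Nat.totient (s i)) :=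
        Finset.sum_le_sum fun i _ => hkey i
    _ = Real.exp 12 * 7000 * Real.log (Real.log D) * ∑ i, (Nat.totient (s i) : ℝ) := by
        rw [Finset.mul_sum]
    _ ≤ Real.exp 12 * 7000 * Real.log (Real.log D) * D := by
        apply mul_le_mul_of_nonneg_left hsumR
        positivity
    _ = Real.exp 12 * 7000 * D * Real.log (Real.log D) := by ring
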